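/- Let T, S be partial isometries on a complex Hilbert space with S = S T* S. Then T S* is an orthogonal projection and T S* = S S*. -/

import Mathlib

open ContinuousLinearMap
open scoped InnerProductSpace

theorem stmt_4 {H : Type*} [NormedAddCommGroup H] [InnerProductSpace ℂ H]
    [CompleteSpace H] (T S : H →L[ℂ] H)
    (hT : T * adjoint T * T = T) (hS : S * adjoint S * S = S)
    (hTS : S = S * adjoint T * S) :
    adjoint (T * adjoint S) = T * adjoint S ∧
      (T * adjoint S) * (T * adjoint S) = T * adjoint S ∧
      T * adjoint S = S * adjoint S := by
  simp only [← star_eq_adjoint] at hT hS hTS ⊢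
  -- idempotence of star A * A for a partial isometry A
  have idem : ∀ A : H →L[ℂ] H, A * star A * A = A →
      (star A * A) * (star A * A) = star A * A := by
    intro A hA
    calc (star A * A) * (star A * A) = star A * (A * star A * A) := by noncomm_ring
    _ = star A * A := by rw [hA]
  have norm_le_one : ∀ A : H →L[ℂ] H, A * star A * A = A → ‖A‖ ≤ 1 := by
    intro A hA
    have hP := idem A hA
    have h1 : ‖star A * A‖ * ‖star A * A‖ = ‖star A * A‖ := by
      have h := CStarRing.norm_star_mul_self (x := star A * A)
      rw [star_mul, star_star, hP] at h
      linarith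
    have h2 : ‖A‖ * ‖A‖ = ‖star A * A‖ := (CStarRing.norm_star_mul_self).symm
    rw [← h2] at h1
    nlinarith [norm_nonneg A, sq_nonneg (‖A‖ - 1), sq_nonneg (‖A‖ + 1), sq_nonneg ‖A‖]
  have hTn := norm_le_one T hT
  have hSn := norm_le_one S hS
  have hTS' : star S * T * star S = star S := by
    conv_rhs => rw [hTS]
    simp [star_mul, mul_assoc]
  have hS' : star S * S * star S = star S := by
    conv_rhs => rw [← hS]
    simp [star_mul, mul_assoc]
  -- key pointwise norm identity
  have hTy : ∀ x : H, ‖T ((star S) x)‖ = ‖(star S) x‖ := by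
    intro x
    have h1 : (star S) x = (star S) (T ((star S) x)) := by
      conv_lhs => rw [← hTS']
      simp [mul_apply]
    have h2 : ‖(star S) x‖ ≤ ‖T ((star S) x)‖ := by
      calc ‖(star S) x‖ = ‖(star S) (T ((star S) x))‖ := by rw [← h1]
      _ ≤ ‖star S‖ * ‖T ((star S) x)‖ := le_opNorm _ _
      _ ≤ 1 * ‖T ((star S) x)‖ := by
            have : ‖star S‖ ≤ 1 := by rwa [norm_star]
            exact mul_le_mul_of_nonneg_right this (norm_nonneg _)
      _ = ‖T ((star S) x)‖ := one_mul _
    have h3 : ‖T ((star S) x)‖ ≤ ‖(star S) x‖ := by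
      calc ‖T ((star S) x)‖ ≤ ‖T‖ * ‖(star S) x‖ := le_opNorm _ _
      _ ≤ 1 * ‖(star S) x‖ := mul_le_mul_of_nonneg_right hTn (norm_nonneg _)
      _ = ‖(star S) x‖ := one_mul _
    linarith
  have hPidem := idem T hT
  have hsa : adjoint (star T * T) = star T * T := by
    rw [← star_eq_adjoint, star_mul, star_star]
  -- key operator identity : star T * T * star S = star S
  have hKey : (star T * T) * star S = star S := by
    ext x
    simp only [ContinuousLinearMap.mul_apply]
    set y := (star S) x with hy
    have e1 : ⟪(star T * T) y, y⟫_ℂ = ⟪T y, T y⟫_ℂ := by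
      rw [ContinuousLinearMap.mul_apply, star_eq_adjoint, adjoint_inner_left]
    have e2 : ⟪y, (star T * T) y⟫_ℂ = ⟪T y, T y⟫_ℂ := by
      rw [ContinuousLinearMap.mul_apply, star_eq_adjoint, adjoint_inner_right]
    have e3 : ⟪(star T * T) y, (star T * T) y⟫_ℂ = ⟪T y, T y⟫_ℂ := by
      have h4 : (star T * T) ((star T * T) y) = (star T * T) y := by
        rw [← ContinuousLinearMap.mul_apply, hPidem]
      calc ⟪(star T * T) y, (star T * T) y⟫_ℂ
          = ⟪(adjoint (star T * T)) y, (star T * T) y⟫_ℂ := by rw [hsa]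
        _ = ⟪y, (star T * T) ((star T * T) y)⟫_ℂ := adjoint_inner_left _ _ _
        _ = ⟪y, (star T * T) y⟫_ℂ := by rw [h4]
        _ = ⟪T y, T y⟫_ℂ := e2
    have hip : ⟪y - (star T * T) y, y - (star T * T) y⟫_ℂ = 0 := by
      rw [inner_sub_sub_self, e1, e2, e3]
      rw [inner_self_eq_norm_sq_to_K, inner_self_eq_norm_sq_to_K]
      rw [hy, hTy x]
      ring
    have := inner_self_eq_zero.mp hip
    have h5 : (star T * T) y = y := by
      have := sub_eq_zero.mp this
      exact this.symm
    simpa [ContinuousLinearMap.mul_apply] using h5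
  -- final algebra
  set A := T * star S with hA
  set Q := S * star S with hQ
  have hsQ : star Q = Q := by rw [hQ, star_mul, star_star]
  have hQQ : Q * Q = Q := by
    calc Q * Q = S * (star S * S * star S) := by rw [hQ]; noncomm_ring
    _ = S * star S := by rw [hS']
  have hQA : Q * A = Q := by
    calc Q * A = S * (star S * T * star S) := by rw [hQ, hA]; noncomm_ring
    _ = S * star S := by rw [hTS']
  have hAQ : A * Q = A := by
    calc A * Q = T * (star S * S * star S) := by rw [hQ, hA]; noncomm_ring
    _ = T * star S := by rw [hS']
  have hAA : star A * A = Q := by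
    calc star A * A = S * ((star T * T) * star S) := by
          rw [hA, star_mul, star_star]; noncomm_ring
    _ = S * star S := by rw [hKey]
  have hsAQ : star A * Q = Q := by
    have h := congrArg star hQA
    rw [star_mul, hsQ] at h
    exact h
  have hsQA : star Q * A = Q := by rw [hsQ, hQA]
  have hX : star (A - Q) * (A - Q) = 0 := by
    rw [star_sub, sub_mul, mul_sub, mul_sub, hAA, hsAQ, hsQA, hsQ, hQQ]
    abel
  have hAeqQ : A = Q := by
    have := CStarRing.star_mul_self_eq_zero_iff (A - Q)
    have h0 : A - Q = 0 := this.mp hX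
    exact sub_eq_zero.mp h0
  refine ⟨?_, ?_, ?_⟩
  · rw [hAeqQ]; exact hsQ
  · rw [hAeqQ]; exact hQQ
  · exact hAeqQ
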